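/- Barrier comparison in the Liouville theorem: Let α > 0, ε > 0 small, and V(x) = ((1+ε)/2)|x'|² + ((1+ε)^{1−n}/((2+α)(1+α))) x_n^{2+α} − ε x_n on ℝ^n_+. Then det D²V = x_n^α, and V ≥ U_0 on {x_n = 0}, and on {|x'| = C_1, 0 ≤ x_n ≤ 1} for suitable C_1(n,α), where U_0(x) = (1/2)|x'|² + x_n^{2+α}/((1+α)(2+α)); moreover V ≥ U_0 − C_2 ε on {|x'| ≤ C_1, x_n = 1} for some C_2(n,α). -/

import Mathlib

noncomputable def pderiv' {n : ℕ} (i : Fin n) (u : (Fin n → ℝ) → ℝ) (x : Fin n → ℝ) : ℝ :=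
  fderiv ℝ u x (Pi.single i 1)

noncomputable def hess {n : ℕ} (u : (Fin n → ℝ) → ℝ) (x : Fin n → ℝ) :
    Matrix (Fin n) (Fin n) ℝ :=
  Matrix.of fun i j => pderiv' j (pderiv' i u) x

open ContinuousLinearMap in
lemma hasFDerivAt_V {n : ℕ} (m : Fin n) (a b e p : ℝ) (y : Fin n → ℝ) (hy : y m ≠ 0) :
    HasFDerivAt (fun x : Fin n → ℝ =>
        a * ∑ i ∈ Finset.univ.erase m, (x i) ^ 2 + b * (x m) ^ p - e * x m)
      (a • (∑ i ∈ Finset.univ.erase m, ((2:ℝ) * y i) • (proj i : (Fin n → ℝ) →L[ℝ] ℝ))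
        + (b * (p * y m ^ (p - 1))) • (proj m : (Fin n → ℝ) →L[ℝ] ℝ)
        - e • (proj m : (Fin n → ℝ) →L[ℝ] ℝ)) y := by
  have hsq : ∀ i : Fin n, HasFDerivAt (fun x : Fin n → ℝ => (x i) ^ 2)
      (((2:ℝ) * y i) • (proj i : (Fin n → ℝ) →L[ℝ] ℝ)) y := by
    intro i
    have h1 : HasDerivAt (fun t : ℝ => t ^ 2) (2 * y i) (y i) := by
      simpa using hasDerivAt_pow 2 (y i)
    exact h1.comp_hasFDerivAt y ((proj i : (Fin n → ℝ) →L[ℝ] ℝ)).hasFDerivAt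
  have hsum : HasFDerivAt (fun x : Fin n → ℝ => ∑ i ∈ Finset.univ.erase m, (x i) ^ 2)
      (∑ i ∈ Finset.univ.erase m, ((2:ℝ) * y i) • (proj i : (Fin n → ℝ) →L[ℝ] ℝ)) y :=
    HasFDerivAt.fun_sum fun i _ => hsq i
  have hr : HasDerivAt (fun t : ℝ => t ^ p) (p * y m ^ (p - 1)) (y m) :=
    Real.hasDerivAt_rpow_const (Or.inl hy)
  have hrp : HasFDerivAt (fun x : Fin n → ℝ => (x m) ^ p)
      ((p * y m ^ (p - 1)) • (proj m : (Fin n → ℝ) →L[ℝ] ℝ)) y :=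
    by have := hr.comp_hasFDerivAt y ((proj m : (Fin n → ℝ) →L[ℝ] ℝ)).hasFDerivAt; exact this
  have hlin : HasFDerivAt (fun x : Fin n → ℝ => x m)
      ((proj m : (Fin n → ℝ) →L[ℝ] ℝ)) y :=
    ((proj m : (Fin n → ℝ) →L[ℝ] ℝ)).hasFDerivAt
  have := ((hsum.fun_const_smul a).fun_add (hrp.fun_const_smul b)).fun_sub (hlin.fun_const_smul e)
  simpa [smul_smul, smul_eq_mul, mul_comm, mul_assoc, mul_left_comm] using this

open ContinuousLinearMap in
lemma pderiv'_V {n : ℕ} (m : Fin n) (a b e p : ℝ) (y : Fin n → ℝ) (hy : y m ≠ 0) (j : Fin n) :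
    pderiv' j (fun x : Fin n → ℝ =>
        a * ∑ i ∈ Finset.univ.erase m, (x i) ^ 2 + b * (x m) ^ p - e * x m) y
      = if j = m then b * (p * y m ^ (p - 1)) - e else 2 * a * y j := by
  rw [pderiv', (hasFDerivAt_V m a b e p y hy).fderiv]
  simp only [ContinuousLinearMap.sub_apply, ContinuousLinearMap.add_apply,
    ContinuousLinearMap.smul_apply, ContinuousLinearMap.sum_apply, proj_apply,
    smul_eq_mul, Pi.single_apply]
  by_cases hj : j = m
  · subst hj
    rw [Finset.sum_eq_zero]
    · simp
    · intro i hi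
      simp only [mul_ite, mul_one, mul_zero, ite_eq_right_iff]
      intro h; exact absurd h (Finset.mem_erase.1 hi).1
  · have hjm : j ∈ Finset.univ.erase m := Finset.mem_erase.2 ⟨hj, Finset.mem_univ j⟩
    rw [Finset.sum_eq_single j]
    · have hmj : ¬ m = j := fun h => hj h.symm
      simp [hj, hmj]; ring
    · intro i hi hij
      simp only [mul_ite, mul_one, mul_zero, ite_eq_right_iff]
      intro h; exact absurd h hij
    · intro h; exact absurd hjm h

open ContinuousLinearMap in
lemma hess_V {n : ℕ} (m : Fin n) (a b e p : ℝ) (x : Fin n → ℝ) (hx : 0 < x m) :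
    hess (fun x : Fin n → ℝ =>
        a * ∑ i ∈ Finset.univ.erase m, (x i) ^ 2 + b * (x m) ^ p - e * x m) x
      = Matrix.diagonal (fun i => if i = m then b * (p * ((p - 1) * x m ^ (p - 2))) else 2 * a) := by
  have hopen : IsOpen {y : Fin n → ℝ | 0 < y m} :=
    isOpen_lt continuous_const (continuous_apply m)
  ext i j
  have hev : (pderiv' i (fun x : Fin n → ℝ =>
        a * ∑ i ∈ Finset.univ.erase m, (x i) ^ 2 + b * (x m) ^ p - e * x m))
      =ᶠ[nhds x] (fun y => if i = m then b * (p * y m ^ (p - 1)) - e else 2 * a * y i) := by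
    filter_upwards [hopen.mem_nhds hx] with y hy
    exact pderiv'_V m a b e p y (ne_of_gt hy) i
  have hfd : fderiv ℝ (pderiv' i (fun x : Fin n → ℝ =>
        a * ∑ i ∈ Finset.univ.erase m, (x i) ^ 2 + b * (x m) ^ p - e * x m)) x
      = fderiv ℝ (fun y => if i = m then b * (p * y m ^ (p - 1)) - e else 2 * a * y i) x :=
    hev.fderiv_eq
  by_cases hi : i = m
  · subst hi
    have hr : HasDerivAt (fun t : ℝ => t ^ (p - 1)) ((p - 1) * x i ^ (p - 1 - 1)) (x i) :=
      Real.hasDerivAt_rpow_const (Or.inl (ne_of_gt hx))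
    have h2 : HasFDerivAt (fun y : Fin n → ℝ => b * (p * y i ^ (p - 1)) - e)
        ((b * (p * ((p - 1) * x i ^ (p - 2)))) • (proj i : (Fin n → ℝ) →L[ℝ] ℝ)) x := by
      have := (((hr.comp_hasFDerivAt x
        ((proj i : (Fin n → ℝ) →L[ℝ] ℝ)).hasFDerivAt).const_mul p).const_mul b).sub_const e
      have hexp : p - 1 - 1 = p - 2 := by ring
      simpa [hexp, smul_smul, mul_assoc] using this
    simp only [hess, Matrix.of_apply, pderiv', hfd]
    simp only [if_true, eq_self_iff_true]
    rw [h2.fderiv]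
    simp only [ContinuousLinearMap.smul_apply, proj_apply, Pi.single_apply, smul_eq_mul]
    rw [Matrix.diagonal_apply, if_pos rfl]
    by_cases hj : i = j
    · subst hj; simp
    · have : ¬ j = i := fun h => hj h.symm
      simp [this, hj]
  · have h2 : HasFDerivAt (fun y : Fin n → ℝ => 2 * a * y i)
        ((2 * a) • (proj i : (Fin n → ℝ) →L[ℝ] ℝ)) x :=
      ((proj i : (Fin n → ℝ) →L[ℝ] ℝ)).hasFDerivAt.const_mul (2 * a)
    simp only [hess, Matrix.of_apply, pderiv', hfd]
    simp only [if_neg hi]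
    rw [h2.fderiv]
    simp only [ContinuousLinearMap.smul_apply, proj_apply, Pi.single_apply, smul_eq_mul]
    rw [Matrix.diagonal_apply]
    by_cases hj : i = j
    · subst hj; simp [hi]
    · have : ¬ j = i := fun h => hj h.symm
      simp [this, hj]

lemma bernoulli_rpow (n : ℕ) (hn : 2 ≤ n) (ε : ℝ) (hε : 0 < ε) :
    1 - ((n : ℝ) - 1) * ε ≤ (1 + ε) ^ ((1 : ℝ) - n) := by
  have hpos : (0:ℝ) < 1 + ε := by linarith
  have ha : (-2:ℝ) ≤ -ε / (1 + ε) := by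
    have h0 : ε / (1 + ε) ≤ 1 := (div_le_one (by linarith)).2 (by linarith)
    have : -ε / (1 + ε) = -(ε / (1 + ε)) := by ring
    rw [this]; linarith
  have hpow := one_add_mul_le_pow ha (n - 1)
  have h1 : 1 + (-ε / (1 + ε)) = (1 + ε)⁻¹ := by field_simp; ring
  have h2 : ((1 + ε)⁻¹) ^ (n - 1 : ℕ) = (1 + ε) ^ ((1 : ℝ) - n) := by
    rw [inv_pow, ← Real.rpow_natCast (1 + ε) (n - 1), ← Real.rpow_neg hpos.le]
    congr 1
    rw [Nat.cast_sub (by omega)]; push_cast; ring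
  rw [h1, h2] at hpow
  refine le_trans ?_ hpow
  have hk0 : (0:ℝ) ≤ (n:ℝ) - 1 := by
    have : (2:ℝ) ≤ n := by exact_mod_cast hn
    linarith
  have hcast : ((n - 1 : ℕ) : ℝ) = (n : ℝ) - 1 := by
    rw [Nat.cast_sub (by omega)]; simp
  rw [hcast]
  have hdiv : ε / (1 + ε) ≤ ε := div_le_self hε.le (by linarith)
  have h3 := mul_le_mul_of_nonneg_left hdiv hk0
  have : ((n:ℝ)-1) * (-ε / (1 + ε)) = -(((n:ℝ)-1) * (ε / (1 + ε))) := by ring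
  rw [this]; linarith

lemma stmt16_parts {n : ℕ} (hn : 2 ≤ n) (α : ℝ) (hα : 0 < α) (m : Fin n)
    (ε : ℝ) (hε : 0 < ε) (hε1 : ε ≤ 1) :
    (∀ x : Fin n → ℝ, 0 < x m →
      (hess (fun x => ((1 + ε) / 2) * ∑ i ∈ Finset.univ.erase m, (x i) ^ 2 +
        ((1 + ε) ^ ((1 : ℝ) - n) / ((2 + α) * (1 + α))) * (x m) ^ ((2 : ℝ) + α) -
        ε * x m) x).det = (x m) ^ α) ∧
    (∀ x : Fin n → ℝ, x m = 0 →
      ((1 / 2) * ∑ i ∈ Finset.univ.erase m, (x i) ^ 2 +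
        (x m) ^ ((2 : ℝ) + α) / ((1 + α) * (2 + α))) ≤
      (((1 + ε) / 2) * ∑ i ∈ Finset.univ.erase m, (x i) ^ 2 +
        ((1 + ε) ^ ((1 : ℝ) - n) / ((2 + α) * (1 + α))) * (x m) ^ ((2 : ℝ) + α) -
        ε * x m)) ∧
    (∀ x : Fin n → ℝ, 0 ≤ x m → x m ≤ 1 →
      (∑ i ∈ Finset.univ.erase m, (x i) ^ 2) = Real.sqrt ((n:ℝ) + 1) ^ 2 →
      ((1 / 2) * ∑ i ∈ Finset.univ.erase m, (x i) ^ 2 +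
        (x m) ^ ((2 : ℝ) + α) / ((1 + α) * (2 + α))) ≤
      (((1 + ε) / 2) * ∑ i ∈ Finset.univ.erase m, (x i) ^ 2 +
        ((1 + ε) ^ ((1 : ℝ) - n) / ((2 + α) * (1 + α))) * (x m) ^ ((2 : ℝ) + α) -
        ε * x m)) ∧
    (∀ x : Fin n → ℝ, x m = 1 →
      (∑ i ∈ Finset.univ.erase m, (x i) ^ 2) ≤ Real.sqrt ((n:ℝ) + 1) ^ 2 →
      ((1 / 2) * ∑ i ∈ Finset.univ.erase m, (x i) ^ 2 +
        (x m) ^ ((2 : ℝ) + α) / ((1 + α) * (2 + α))) - ((n:ℝ) + 1) * ε ≤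
      (((1 + ε) / 2) * ∑ i ∈ Finset.univ.erase m, (x i) ^ 2 +
        ((1 + ε) ^ ((1 : ℝ) - n) / ((2 + α) * (1 + α))) * (x m) ^ ((2 : ℝ) + α) -
        ε * x m)) := by
  have hn2 : (2:ℝ) ≤ n := by exact_mod_cast hn
  have hC1sq : Real.sqrt ((n:ℝ) + 1) ^ 2 = (n:ℝ) + 1 := Real.sq_sqrt (by positivity)
  have hεpos : (0:ℝ) < 1 + ε := by linarith
  have hDpos : (0:ℝ) < (1 + α) * (2 + α) := by positivity
  have hD2 : (2:ℝ) ≤ (1 + α) * (2 + α) := by nlinarith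
  have hrle : (1 + ε) ^ ((1 : ℝ) - n) ≤ 1 :=
    Real.rpow_le_one_of_one_le_of_nonpos (by linarith) (by linarith)
  have hrge := bernoulli_rpow n hn ε hε
  have hnε : (0:ℝ) ≤ ((n:ℝ) - 1) * ε := by nlinarith
  refine ⟨?_, ?_, ?_, ?_⟩
  · -- determinant
    intro x hx
    rw [hess_V m ((1 + ε) / 2)
          ((1 + ε) ^ ((1 : ℝ) - n) / ((2 + α) * (1 + α))) ε ((2 : ℝ) + α) x hx,
      Matrix.det_diagonal, ← Finset.mul_prod_erase _ _ (Finset.mem_univ m), if_pos rfl]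
    have hprod : (∏ i ∈ Finset.univ.erase m,
        (if i = m then ((1 + ε) ^ ((1 : ℝ) - n) / ((2 + α) * (1 + α))) *
          (((2:ℝ) + α) * ((((2:ℝ) + α) - 1) * x m ^ (((2:ℝ) + α) - 2))) else 2 * ((1 + ε) / 2)))
        = (1 + ε) ^ (n - 1 : ℕ) := by
      rw [Finset.prod_congr rfl (fun i hi => if_neg (Finset.mem_erase.1 hi).1),
        Finset.prod_const, Finset.card_erase_of_mem (Finset.mem_univ m),
        Finset.card_univ, Fintype.card_fin]
      congr 1
      ring
    rw [hprod, show ((2:ℝ) + α) - 2 = α from by ring]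
    have hpow : (1 + ε) ^ ((1 : ℝ) - n) * (1 + ε) ^ (n - 1 : ℕ) = 1 := by
      rw [← Real.rpow_natCast (1 + ε) (n - 1), ← Real.rpow_add hεpos,
        Nat.cast_sub (by omega), Nat.cast_one, show (1:ℝ) - n + ((n:ℝ) - 1) = 0 from by ring,
        Real.rpow_zero]
    have h2α : ((2:ℝ) + α) ≠ 0 := by positivity
    have h1α : ((1:ℝ) + α) ≠ 0 := by positivity
    field_simp
    linear_combination (1 + α) * hpow
  · -- boundary xₙ = 0
    intro x hx
    rw [hx, Real.zero_rpow (by positivity : (2:ℝ) + α ≠ 0)]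
    have hS : 0 ≤ ∑ i ∈ Finset.univ.erase m, (x i) ^ 2 :=
      Finset.sum_nonneg fun i _ => sq_nonneg _
    have hεS := mul_nonneg hε.le hS
    ring_nf
    nlinarith [hεS]
  · -- lateral boundary
    intro x ht0 ht1 hS
    rw [hC1sq] at hS
    set t := x m with htdef
    set T := t ^ ((2:ℝ) + α) with hT
    have hT0 : 0 ≤ T := Real.rpow_nonneg ht0 _
    have hT1 : T ≤ 1 := Real.rpow_le_one ht0 ht1 (by positivity)
    have hkey : (1 - (1 + ε) ^ ((1 : ℝ) - n)) * T / ((1 + α) * (2 + α)) ≤ ((n:ℝ) - 1) * ε / 2 := by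
      apply div_le_div₀ hnε ?_ two_pos hD2
      nlinarith
    have hexp : ((1 + ε) ^ ((1 : ℝ) - n) / ((2 + α) * (1 + α))) * T
        = T / ((1 + α) * (2 + α)) - (1 - (1 + ε) ^ ((1 : ℝ) - n)) * T / ((1 + α) * (2 + α)) := by
      field_simp
      ring
    have hεt : ε * t ≤ ε := by nlinarith
    rw [hS, hexp]
    linarith
  · -- top boundary
    intro x ht hS
    rw [hC1sq] at hS
    have hSnn : 0 ≤ ∑ i ∈ Finset.univ.erase m, (x i) ^ 2 :=
      Finset.sum_nonneg fun i _ => sq_nonneg _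
    rw [ht, Real.one_rpow]
    have hkey : (1 - (1 + ε) ^ ((1 : ℝ) - n)) / ((1 + α) * (2 + α)) ≤ ((n:ℝ) - 1) * ε / 2 := by
      apply div_le_div₀ hnε (by linarith) two_pos hD2
    have hexp : ((1 + ε) ^ ((1 : ℝ) - n) / ((2 + α) * (1 + α))) * 1
        = 1 / ((1 + α) * (2 + α)) - (1 - (1 + ε) ^ ((1 : ℝ) - n)) / ((1 + α) * (2 + α)) := by
      rw [mul_one]
      field_simp
      ring
    rw [hexp]
    have hεS := mul_nonneg hε.le hSnn
    linarith

/-- barrier comparison in the Liouville theorem.  With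
`V(x) = ((1+ε)/2)|x'|² + ((1+ε)^{1-n}/((2+α)(1+α))) xₙ^{2+α} − ε xₙ` and
`U₀(x) = ½|x'|² + xₙ^{2+α}/((1+α)(2+α))`, one has `det D²V = xₙ^α`, `V ≥ U₀` on
`{xₙ = 0}` and on `{|x'| = C₁, 0 ≤ xₙ ≤ 1}`, and `V ≥ U₀ − C₂ ε` on
`{|x'| ≤ C₁, xₙ = 1}`, with `C₁, C₂` depending only on `n, α`. -/
theorem stmt16 (n : ℕ) (hn : 2 ≤ n) (α : ℝ) (hα : 0 < α) :
    ∃ C₁ C₂ : ℝ, 0 < C₁ ∧ 0 < C₂ ∧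
      ∀ ε : ℝ, 0 < ε → ε ≤ 1 →
      ∀ V U₀ : (Fin n → ℝ) → ℝ,
        V = (fun x => ((1 + ε) / 2) * ∑ i ∈ Finset.univ.erase ⟨n - 1, by omega⟩, (x i) ^ 2 +
          ((1 + ε) ^ ((1 : ℝ) - n) / ((2 + α) * (1 + α))) *
            (x ⟨n - 1, by omega⟩) ^ ((2 : ℝ) + α) -
          ε * x ⟨n - 1, by omega⟩) →
        U₀ = (fun x => (1 / 2) * ∑ i ∈ Finset.univ.erase ⟨n - 1, by omega⟩, (x i) ^ 2 +
          (x ⟨n - 1, by omega⟩) ^ ((2 : ℝ) + α) / ((1 + α) * (2 + α))) →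
        (∀ x : Fin n → ℝ, 0 < x ⟨n - 1, by omega⟩ →
          (hess V x).det = (x ⟨n - 1, by omega⟩) ^ α) ∧
        (∀ x : Fin n → ℝ, x ⟨n - 1, by omega⟩ = 0 → U₀ x ≤ V x) ∧
        (∀ x : Fin n → ℝ, 0 ≤ x ⟨n - 1, by omega⟩ → x ⟨n - 1, by omega⟩ ≤ 1 →
          (∑ i ∈ Finset.univ.erase ⟨n - 1, by omega⟩, (x i) ^ 2) = C₁ ^ 2 → U₀ x ≤ V x) ∧
        (∀ x : Fin n → ℝ, x ⟨n - 1, by omega⟩ = 1 →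
          (∑ i ∈ Finset.univ.erase ⟨n - 1, by omega⟩, (x i) ^ 2) ≤ C₁ ^ 2 →
          U₀ x - C₂ * ε ≤ V x) := by
  refine ⟨Real.sqrt ((n:ℝ) + 1), (n:ℝ) + 1, Real.sqrt_pos.2 (by positivity), by positivity, ?_⟩
  intro ε hε hε1 V U₀ hV hU₀
  subst hV hU₀
  obtain ⟨h1, h2, h3, h4⟩ := stmt16_parts hn α hα ⟨n - 1, by omega⟩ ε hε hε1
  exact ⟨h1, h2, h3, fun x ht hS => h4 x ht hS⟩
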